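/- Let v* be feasible for the MPEC min f(v) s.t. G(v) ≥ 0, H(v) ≥ 0, G(v)ᵀH(v) = 0 with f, G, H continuously differentiable, and let ε_t ↓ 0. Suppose v^t is a KKT point of the smoothed problem min f(v) s.t. Φ_{ε_t}(G(v), H(v)) = 0 at which LICQ holds for each t, and v^t → v* along a subsequence. If MPEC-LICQ holds at v*, then the sequence of Lagrange multipliers λ^{(t)} of the smoothed problems is bounded. -/

import Mathlib

open Filter

/-- The FB weight `1 − a/√(a² + b² + ε²)`. -/
noncomputable def fbWeight (ε a b : ℝ) : ℝ := 1 - a / Real.sqrt (a ^ 2 + b ^ 2 + ε ^ 2)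

lemma fb_sqrt_pos {ε a b : ℝ} (hε : ε ≠ 0) : 0 < Real.sqrt (a ^ 2 + b ^ 2 + ε ^ 2) :=
  Real.sqrt_pos.2 (by positivity)

lemma fb_abs_le {ε a b : ℝ} (hε : ε ≠ 0) : |fbWeight ε a b| ≤ 2 := by
  have hs := fb_sqrt_pos (a := a) (b := b) hε
  have h1 : |a| ≤ Real.sqrt (a ^ 2 + b ^ 2 + ε ^ 2) := by
    rw [← Real.sqrt_sq_eq_abs]
    exact Real.sqrt_le_sqrt (by nlinarith [sq_nonneg b, sq_nonneg ε])
  have h2 : |a / Real.sqrt (a ^ 2 + b ^ 2 + ε ^ 2)| ≤ 1 := by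
    rw [abs_div, abs_of_pos hs, div_le_one hs]; exact h1
  have h3 := abs_le.1 h2
  rw [fbWeight, abs_le]
  constructor <;> linarith [h3.1, h3.2]

lemma fb_sum {ε a b : ℝ} (hε : ε ≠ 0)
    (h : a + b - Real.sqrt (a ^ 2 + b ^ 2 + ε ^ 2) = 0) :
    fbWeight ε a b + fbWeight ε b a = 1 := by
  have hs := fb_sqrt_pos (a := a) (b := b) hε
  rw [fbWeight, fbWeight, show b ^ 2 + a ^ 2 + ε ^ 2 = a ^ 2 + b ^ 2 + ε ^ 2 by ring]
  have h2 : a / Real.sqrt (a ^ 2 + b ^ 2 + ε ^ 2) + b / Real.sqrt (a ^ 2 + b ^ 2 + ε ^ 2) = 1 := by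
    rw [← add_div, show a + b = Real.sqrt (a ^ 2 + b ^ 2 + ε ^ 2) by linarith,
      div_self hs.ne']
  linarith

lemma fb_tendsto_zero {a b e : ℕ → ℝ} {A : ℝ} (hA : 0 < A)
    (ha : Tendsto a atTop (nhds A)) (hb : Tendsto b atTop (nhds 0))
    (he : Tendsto e atTop (nhds 0)) :
    Tendsto (fun j => fbWeight (e j) (a j) (b j)) atTop (nhds 0) := by
  have hsq : Tendsto (fun j => Real.sqrt ((a j) ^ 2 + (b j) ^ 2 + (e j) ^ 2)) atTop (nhds A) := by
    have h1 : Tendsto (fun j => (a j) ^ 2 + (b j) ^ 2 + (e j) ^ 2) atTop (nhds (A ^ 2)) := by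
      have := ((ha.pow 2).add (hb.pow 2)).add (he.pow 2)
      simpa using this
    have h2 := (Real.continuous_sqrt.tendsto (A ^ 2)).comp h1
    simpa [Function.comp_def, Real.sqrt_sq hA.le] using h2
  have hdiv : Tendsto (fun j => a j / Real.sqrt ((a j) ^ 2 + (b j) ^ 2 + (e j) ^ 2))
      atTop (nhds (A / A)) := ha.div hsq hA.ne'
  have h3 : Tendsto (fun j => fbWeight (e j) (a j) (b j)) atTop (nhds (1 - A / A)) :=
    tendsto_const_nhds.sub hdiv
  simpa [div_self hA.ne'] using h3


/-- Boundedness of the multipliers: if `v^t` are KKT points of the smoothed problems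
(NLP_{ε_t}) at which LICQ holds, `ε_t ↓ 0`, `v^t → v*`, and MPEC-LICQ holds at `v*`,
then the sequence of Lagrange multipliers `λ^{(t)}` is bounded. -/
theorem smoothing_multipliers_bounded {n m : ℕ}
    (f : (Fin n → ℝ) → ℝ) (G H : (Fin n → ℝ) → Fin m → ℝ)
    (hf : ContDiff ℝ 1 f)
    (hG : ∀ i, ContDiff ℝ 1 (fun x => G x i))
    (hH : ∀ i, ContDiff ℝ 1 (fun x => H x i))
    (ε : ℕ → ℝ) (hεpos : ∀ t, 0 < ε t) (hεanti : StrictAnti ε)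
    (hε0 : Tendsto ε atTop (nhds 0))
    (v : ℕ → Fin n → ℝ) (lam : ℕ → Fin m → ℝ)
    -- feasibility for (NLP_{ε_t})
    (hfeas : ∀ t i, G (v t) i + H (v t) i -
      Real.sqrt ((G (v t) i) ^ 2 + (H (v t) i) ^ 2 + (ε t) ^ 2) = 0)
    -- KKT stationarity of (NLP_{ε_t})
    (hkkt : ∀ t, fderiv ℝ f (v t) =
      ∑ i : Fin m, lam t i •
        (fbWeight (ε t) (G (v t) i) (H (v t) i) • fderiv ℝ (fun x => G x i) (v t) +
         fbWeight (ε t) (H (v t) i) (G (v t) i) • fderiv ℝ (fun x => H x i) (v t)))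
    -- LICQ at each `v^t`: the constraint gradients of (NLP_{ε_t}) are independent
    (hlicq : ∀ t, LinearIndependent ℝ (fun i : Fin m =>
      fbWeight (ε t) (G (v t) i) (H (v t) i) • fderiv ℝ (fun x => G x i) (v t) +
      fbWeight (ε t) (H (v t) i) (G (v t) i) • fderiv ℝ (fun x => H x i) (v t)))
    (vstar : Fin n → ℝ)
    (hconv : Tendsto v atTop (nhds vstar))
    -- MPEC-LICQ at `v*`
    (hmpec : LinearIndependent ℝ (Sum.elim
      (fun i : {i : Fin m // G vstar i = 0} => fderiv ℝ (fun x => G x i.1) vstar)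
      (fun i : {i : Fin m // H vstar i = 0} => fderiv ℝ (fun x => H x i.1) vstar))) :
    ∃ Cb : ℝ, ∀ t i, |lam t i| ≤ Cb := by
  classical
  by_contra hcon
  push_neg at hcon
  -- continuity facts
  have hGc : ∀ i, Tendsto (fun t => G (v t) i) atTop (nhds (G vstar i)) :=
    fun i => ((hG i).continuous.tendsto vstar).comp hconv
  have hHc : ∀ i, Tendsto (fun t => H (v t) i) atTop (nhds (H vstar i)) :=
    fun i => ((hH i).continuous.tendsto vstar).comp hconv
  -- limit feasibility
  have hfeas' : ∀ i, G vstar i + H vstar i =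
      Real.sqrt ((G vstar i) ^ 2 + (H vstar i) ^ 2) := by
    intro i
    have h1 : Tendsto (fun t => G (v t) i + H (v t) i -
        Real.sqrt ((G (v t) i) ^ 2 + (H (v t) i) ^ 2 + (ε t) ^ 2)) atTop
        (nhds (G vstar i + H vstar i -
          Real.sqrt ((G vstar i) ^ 2 + (H vstar i) ^ 2 + (0:ℝ) ^ 2))) := by
      refine Tendsto.sub ((hGc i).add (hHc i)) ?_
      exact (Real.continuous_sqrt.tendsto _).comp
        ((((hGc i).pow 2).add ((hHc i).pow 2)).add (hε0.pow 2))
    have h0 : Tendsto (fun t => (0:ℝ)) atTop (nhds (G vstar i + H vstar i -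
        Real.sqrt ((G vstar i) ^ 2 + (H vstar i) ^ 2 + (0:ℝ) ^ 2))) :=
      h1.congr (fun t => hfeas t i)
    have h2 := tendsto_nhds_unique h0 tendsto_const_nhds
    have h3 : ((0:ℝ)) ^ 2 = 0 := by norm_num
    rw [h3, add_zero] at h2
    linarith
  have hprod : ∀ i, G vstar i * H vstar i = 0 := by
    intro i
    have h := hfeas' i
    have h2 : (G vstar i + H vstar i) ^ 2 = (G vstar i) ^ 2 + (H vstar i) ^ 2 := by
      rw [h, Real.sq_sqrt (by positivity)]
    nlinarith
  have hkeyG : ∀ i, G vstar i ≠ 0 → H vstar i = 0 ∧ 0 < G vstar i := by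
    intro i hi
    have hH0 : H vstar i = 0 := by
      rcases mul_eq_zero.1 (hprod i) with h | h
      · exact absurd h hi
      · exact h
    refine ⟨hH0, ?_⟩
    have h := hfeas' i
    rw [hH0] at h
    have h4 : ((0:ℝ)) ^ 2 = 0 := by norm_num
    rw [add_zero, h4, add_zero, Real.sqrt_sq_eq_abs] at h
    rcases hi.lt_or_gt with hlt | hgt
    · rw [abs_of_neg hlt] at h; linarith
    · exact hgt
  have hkeyH : ∀ i, H vstar i ≠ 0 → G vstar i = 0 ∧ 0 < H vstar i := by
    intro i hi
    have hG0 : G vstar i = 0 := by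
      rcases mul_eq_zero.1 (hprod i) with h | h
      · exact h
      · exact absurd h hi
    refine ⟨hG0, ?_⟩
    have h := hfeas' i
    rw [hG0] at h
    have h4 : ((0:ℝ)) ^ 2 = 0 := by norm_num
    rw [zero_add, h4, zero_add, Real.sqrt_sq_eq_abs] at h
    rcases hi.lt_or_gt with hlt | hgt
    · rw [abs_of_neg hlt] at h; linarith
    · exact hgt
  -- extraction of an unbounded subsequence
  have hfreq : ∀ k : ℕ, ∃ᶠ t in atTop, (k : ℝ) < ‖lam t‖ := by
    intro k
    rw [frequently_atTop]
    intro a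
    obtain ⟨t, i, ht⟩ := hcon ((k : ℝ) + ∑ r ∈ Finset.range (a + 1), ‖lam r‖)
    have hle : |lam t i| ≤ ‖lam t‖ := norm_le_pi_norm (lam t) i
    have hsum_nonneg : (0:ℝ) ≤ ∑ r ∈ Finset.range (a + 1), ‖lam r‖ :=
      Finset.sum_nonneg fun r _ => norm_nonneg _
    refine ⟨t, ?_, by linarith⟩
    by_contra hta
    push_neg at hta
    have hmem : t ∈ Finset.range (a + 1) := Finset.mem_range.2 (by omega)
    have : ‖lam t‖ ≤ ∑ r ∈ Finset.range (a + 1), ‖lam r‖ :=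
      Finset.single_le_sum (fun r _ => norm_nonneg (lam r)) hmem
    have hk : (0:ℝ) ≤ (k : ℝ) := Nat.cast_nonneg k
    linarith
  obtain ⟨u, humono, hu⟩ := Filter.extraction_forall_of_frequently hfreq
  have huTop : Tendsto u atTop atTop := humono.tendsto_atTop
  -- normalized quantities
  set s : ℕ → ℝ := fun j => max 1 ‖lam (u j)‖ with hs_def
  have hspos : ∀ j, 0 < s j := fun j => lt_of_lt_of_le one_pos (le_max_left _ _)
  have hsge_norm : ∀ j, ‖lam (u j)‖ ≤ s j := fun j => le_max_right _ _
  have hsge : ∀ j : ℕ, (j : ℝ) ≤ s j := fun j => le_trans (hu j).le (le_max_right _ _)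
  set μ : ℕ → Fin m → ℝ := fun j i => lam (u j) i / s j with hμ_def
  have hμle : ∀ j i, |μ j i| ≤ 1 := by
    intro j i
    rw [hμ_def]
    simp only
    rw [abs_div, abs_of_pos (hspos j), div_le_one (hspos j)]
    exact le_trans (norm_le_pi_norm (lam (u j)) i) (hsge_norm j)
  set Γ : ℕ → Fin m → ℝ × ℝ := fun j i =>
    (μ j i * fbWeight (ε (u j)) (G (v (u j)) i) (H (v (u j)) i),
     μ j i * fbWeight (ε (u j)) (H (v (u j)) i) (G (v (u j)) i)) with hΓ_def
  have hΓmem : ∀ j, Γ j ∈ Metric.closedBall (0 : Fin m → ℝ × ℝ) 2 := by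
    intro j
    rw [Metric.mem_closedBall, dist_zero_right]
    refine pi_norm_le_iff_of_nonneg (by norm_num) |>.2 fun i => ?_
    have hb1 : |μ j i * fbWeight (ε (u j)) (G (v (u j)) i) (H (v (u j)) i)| ≤ 2 := by
      rw [abs_mul]
      calc |μ j i| * |fbWeight (ε (u j)) (G (v (u j)) i) (H (v (u j)) i)|
          ≤ 1 * 2 := mul_le_mul (hμle j i) (fb_abs_le (hεpos (u j)).ne') (abs_nonneg _)
            zero_le_one
        _ = 2 := one_mul 2
    have hb2 : |μ j i * fbWeight (ε (u j)) (H (v (u j)) i) (G (v (u j)) i)| ≤ 2 := by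
      rw [abs_mul]
      calc |μ j i| * |fbWeight (ε (u j)) (H (v (u j)) i) (G (v (u j)) i)|
          ≤ 1 * 2 := mul_le_mul (hμle j i) (fb_abs_le (hεpos (u j)).ne') (abs_nonneg _)
            zero_le_one
        _ = 2 := one_mul 2
    rw [hΓ_def]
    simp only [Prod.norm_def, Real.norm_eq_abs]
    exact max_le hb1 hb2
  obtain ⟨L, -, ψ, hψmono, hψlim⟩ :=
    tendsto_subseq_of_bounded Metric.isBounded_closedBall hΓmem
  have huψTop : Tendsto (fun j => u (ψ j)) atTop atTop := huTop.comp hψmono.tendsto_atTop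
  have hvψ : Tendsto (fun j => v (u (ψ j))) atTop (nhds vstar) := hconv.comp huψTop
  have hLcoord : ∀ i, Tendsto (fun j => Γ (ψ j) i) atTop (nhds (L i)) := by
    intro i
    exact tendsto_pi_nhds.1 hψlim i
  have h1st : ∀ i, Tendsto (fun j => (Γ (ψ j) i).1) atTop (nhds (L i).1) := fun i =>
    (continuous_fst.tendsto (L i)).comp (hLcoord i)
  have h2nd : ∀ i, Tendsto (fun j => (Γ (ψ j) i).2) atTop (nhds (L i).2) := fun i =>
    (continuous_snd.tendsto (L i)).comp (hLcoord i)
  -- scaled stationarity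
  have hstat : ∀ j, (s j)⁻¹ • fderiv ℝ f (v (u j)) =
      ∑ i : Fin m, ((Γ j i).1 • fderiv ℝ (fun x => G x i) (v (u j)) +
        (Γ j i).2 • fderiv ℝ (fun x => H x i) (v (u j))) := by
    intro j
    rw [hkkt (u j), Finset.smul_sum]
    refine Finset.sum_congr rfl fun i _ => ?_
    simp only [hΓ_def, hμ_def, smul_add, smul_smul]
    congr 1
    · congr 1
      rw [div_eq_mul_inv]; ring
    · congr 1
      rw [div_eq_mul_inv]; ring
  -- limit of the left side
  have hstop : Tendsto (fun j => s (ψ j)) atTop atTop := by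
    refine tendsto_atTop_mono (fun j => ?_) tendsto_natCast_atTop_atTop
    calc (j : ℝ) ≤ (ψ j : ℝ) := Nat.cast_le.2 hψmono.le_apply
      _ ≤ s (ψ j) := hsge (ψ j)
  have hfd : Tendsto (fun j => fderiv ℝ f (v (u (ψ j)))) atTop (nhds (fderiv ℝ f vstar)) :=
    ((hf.continuous_fderiv one_ne_zero).tendsto vstar).comp hvψ
  have hlhs : Tendsto (fun j => (s (ψ j))⁻¹ • fderiv ℝ f (v (u (ψ j)))) atTop
      (nhds (0 : (Fin n → ℝ) →L[ℝ] ℝ)) := by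
    have h1 : Tendsto (fun j => (s (ψ j))⁻¹) atTop (nhds (0:ℝ)) :=
      tendsto_inv_atTop_zero.comp hstop
    have h2 := h1.smul hfd
    simpa using h2
  have hGd : ∀ i, Tendsto (fun j => fderiv ℝ (fun x => G x i) (v (u (ψ j)))) atTop
      (nhds (fderiv ℝ (fun x => G x i) vstar)) :=
    fun i => (((hG i).continuous_fderiv one_ne_zero).tendsto vstar).comp hvψ
  have hHd : ∀ i, Tendsto (fun j => fderiv ℝ (fun x => H x i) (v (u (ψ j)))) atTop
      (nhds (fderiv ℝ (fun x => H x i) vstar)) :=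
    fun i => (((hH i).continuous_fderiv one_ne_zero).tendsto vstar).comp hvψ
  have hrhs : Tendsto (fun j => ∑ i : Fin m,
      ((Γ (ψ j) i).1 • fderiv ℝ (fun x => G x i) (v (u (ψ j))) +
        (Γ (ψ j) i).2 • fderiv ℝ (fun x => H x i) (v (u (ψ j))))) atTop
      (nhds (∑ i : Fin m, ((L i).1 • fderiv ℝ (fun x => G x i) vstar +
        (L i).2 • fderiv ℝ (fun x => H x i) vstar))) := by
    refine tendsto_finset_sum _ fun i _ => Tendsto.add ?_ ?_
    · exact (h1st i).smul (hGd i)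
    · exact (h2nd i).smul (hHd i)
  have heq0 : (0 : (Fin n → ℝ) →L[ℝ] ℝ) =
      ∑ i : Fin m, ((L i).1 • fderiv ℝ (fun x => G x i) vstar +
        (L i).2 • fderiv ℝ (fun x => H x i) vstar) :=
    tendsto_nhds_unique (hlhs.congr (fun j => hstat (ψ j))) hrhs
  -- vanishing of coefficients on inactive indices
  have hA0 : ∀ i, G vstar i ≠ 0 → (L i).1 = 0 := by
    intro i hi
    obtain ⟨hH0, hGpos⟩ := hkeyG i hi
    have hw1 : Tendsto (fun j =>
        fbWeight (ε (u (ψ j))) (G (v (u (ψ j))) i) (H (v (u (ψ j))) i)) atTop (nhds 0) := by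
      refine fb_tendsto_zero hGpos ((hGc i).comp huψTop) ?_ (hε0.comp huψTop)
      have h2 := (hHc i).comp huψTop
      rwa [hH0] at h2
    have hz : Tendsto (fun j => (Γ (ψ j) i).1) atTop (nhds 0) := by
      refine squeeze_zero_norm (fun j => ?_) (by simpa using hw1.abs)
      simp only [hΓ_def, Real.norm_eq_abs, abs_mul]
      calc |μ (ψ j) i| * |fbWeight (ε (u (ψ j))) (G (v (u (ψ j))) i) (H (v (u (ψ j))) i)|
          ≤ 1 * |fbWeight (ε (u (ψ j))) (G (v (u (ψ j))) i) (H (v (u (ψ j))) i)| :=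
            mul_le_mul_of_nonneg_right (hμle _ _) (abs_nonneg _)
        _ = _ := one_mul _
    exact tendsto_nhds_unique (h1st i) hz
  have hB0 : ∀ i, H vstar i ≠ 0 → (L i).2 = 0 := by
    intro i hi
    obtain ⟨hG0, hHpos⟩ := hkeyH i hi
    have hw2 : Tendsto (fun j =>
        fbWeight (ε (u (ψ j))) (H (v (u (ψ j))) i) (G (v (u (ψ j))) i)) atTop (nhds 0) := by
      refine fb_tendsto_zero hHpos ((hHc i).comp huψTop) ?_ (hε0.comp huψTop)
      have h2 := (hGc i).comp huψTop
      rwa [hG0] at h2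
    have hz : Tendsto (fun j => (Γ (ψ j) i).2) atTop (nhds 0) := by
      refine squeeze_zero_norm (fun j => ?_) (by simpa using hw2.abs)
      simp only [hΓ_def, Real.norm_eq_abs, abs_mul]
      calc |μ (ψ j) i| * |fbWeight (ε (u (ψ j))) (H (v (u (ψ j))) i) (G (v (u (ψ j))) i)|
          ≤ 1 * |fbWeight (ε (u (ψ j))) (H (v (u (ψ j))) i) (G (v (u (ψ j))) i)| :=
            mul_le_mul_of_nonneg_right (hμle _ _) (abs_nonneg _)
        _ = _ := one_mul _
    exact tendsto_nhds_unique (h2nd i) hz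
  -- apply MPEC-LICQ
  have hcoef : ∀ gi : {i : Fin m // G vstar i = 0} ⊕ {i : Fin m // H vstar i = 0},
      Sum.elim (fun i : {i : Fin m // G vstar i = 0} => (L i.1).1)
        (fun i : {i : Fin m // H vstar i = 0} => (L i.1).2) gi = 0 := by
    refine Fintype.linearIndependent_iff.1 hmpec _ ?_
    rw [Fintype.sum_sum_type]
    simp only [Sum.elim_inl, Sum.elim_inr]
    have hGsplit : (∑ i : {i : Fin m // G vstar i = 0},
        (L i.1).1 • fderiv ℝ (fun x => G x i.1) vstar)
        = ∑ i : Fin m, (L i).1 • fderiv ℝ (fun x => G x i) vstar := by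
      rw [← Finset.sum_subtype (Finset.univ.filter fun i => G vstar i = 0)
        (fun i => by simp) (fun i => (L i).1 • fderiv ℝ (fun x => G x i) vstar)]
      refine Finset.sum_filter_of_ne fun i _ hne => ?_
      by_contra hGi
      exact hne (by rw [hA0 i hGi, zero_smul])
    have hHsplit : (∑ i : {i : Fin m // H vstar i = 0},
        (L i.1).2 • fderiv ℝ (fun x => H x i.1) vstar)
        = ∑ i : Fin m, (L i).2 • fderiv ℝ (fun x => H x i) vstar := by
      rw [← Finset.sum_subtype (Finset.univ.filter fun i => H vstar i = 0)
        (fun i => by simp) (fun i => (L i).2 • fderiv ℝ (fun x => H x i) vstar)]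
      refine Finset.sum_filter_of_ne fun i _ hne => ?_
      by_contra hHi
      exact hne (by rw [hB0 i hHi, zero_smul])
    rw [hGsplit, hHsplit, ← Finset.sum_add_distrib]
    exact heq0.symm
  have hL1 : ∀ i, (L i).1 = 0 := by
    intro i
    rcases eq_or_ne (G vstar i) 0 with h | h
    · exact hcoef (Sum.inl ⟨i, h⟩)
    · exact hA0 i h
  have hL2 : ∀ i, (L i).2 = 0 := by
    intro i
    rcases eq_or_ne (H vstar i) 0 with h | h
    · exact hcoef (Sum.inr ⟨i, h⟩)
    · exact hB0 i h
  -- the normalized multipliers tend to zero ...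
  have hμsum : ∀ j i, μ j i = (Γ j i).1 + (Γ j i).2 := by
    intro j i
    simp only [hΓ_def]
    rw [← mul_add, fb_sum (hεpos (u j)).ne' (hfeas (u j) i), mul_one]
  have hμlim : Tendsto (fun j => μ (ψ j)) atTop (nhds (0 : Fin m → ℝ)) := by
    rw [tendsto_pi_nhds]
    intro i
    have h1 : Tendsto (fun j => (Γ (ψ j) i).1 + (Γ (ψ j) i).2) atTop
        (nhds ((L i).1 + (L i).2)) := (h1st i).add (h2nd i)
    rw [hL1 i, hL2 i, add_zero] at h1
    simpa using h1.congr fun j => (hμsum (ψ j) i).symm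
  have hnormlim : Tendsto (fun j => ‖μ (ψ j)‖) atTop (nhds 0) := by
    have h2 := (continuous_norm.tendsto (0 : Fin m → ℝ)).comp hμlim
    simpa [Function.comp_def] using h2
  -- ... but have norm one far out: contradiction
  obtain ⟨j, hjlt, hj1⟩ :=
    ((hnormlim.eventually_lt_const one_pos).and (eventually_ge_atTop 1)).exists
  have hψj1 : (1 : ℝ) ≤ (ψ j : ℝ) := by
    exact_mod_cast le_trans hj1 hψmono.le_apply
  have hsψ : s (ψ j) = ‖lam (u (ψ j))‖ := by
    have h1 : (1 : ℝ) ≤ ‖lam (u (ψ j))‖ := le_of_lt (lt_of_le_of_lt hψj1 (hu (ψ j)))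
    exact max_eq_right h1
  have hnorm1 : ‖μ (ψ j)‖ = 1 := by
    have hfun : μ (ψ j) = (s (ψ j))⁻¹ • lam (u (ψ j)) := by
      funext i
      simp only [hμ_def, Pi.smul_apply, smul_eq_mul]
      rw [div_eq_inv_mul]
    have hne : ‖lam (u (ψ j))‖ ≠ 0 := by
      rw [← hsψ]; exact (hspos (ψ j)).ne'
    rw [hfun, norm_smul, Real.norm_eq_abs, abs_of_pos (inv_pos.2 (hspos (ψ j))), hsψ,
      inv_mul_cancel₀ hne]
  rw [hnorm1] at hjlt
  exact lt_irrefl 1 hjlt
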